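/- Every closed convex set C ⊆ ℝ^n is K-outward minimizing in every open ball B(0,R), R > 0: Per_K(C,B(0,R)) ≤ Per_K(F,B(0,R)) for every measurable F ⊇ C with F∖C compactly contained in B(0,R). -/

import Mathlib

open MeasureTheory Set Filter Metric Topology
open scoped ENNReal Pointwise

noncomputable section

abbrev Euc (n : ℕ) := EuclideanSpace ℝ (Fin n)

/-- Admissible kernel: measurable, nonnegative and even away from the origin,
with `∫ min(1,|x|) K(x) dx < ∞`. -/
def KernelOK {n : ℕ} (K : Euc n → ℝ) : Prop :=
  Measurable K ∧ (∀ x : Euc n, x ≠ 0 → 0 ≤ K x) ∧ (∀ x : Euc n, x ≠ 0 → K (-x) = K x) ∧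
    (∫⁻ x : Euc n, ENNReal.ofReal (min 1 ‖x‖ * K x)) < ⊤

/-- The `K`-perimeter of `E` in `Ω`. -/
def perK {n : ℕ} (K : Euc n → ℝ) (E Ω : Set (Euc n)) : ℝ≥0∞ :=
  (∫⁻ x in E, ∫⁻ y in Ω \ E, ENNReal.ofReal (K (x - y))) +
  (∫⁻ x in E ∩ Ω, ∫⁻ y in (Ω ∪ E)ᶜ, ENNReal.ofReal (K (x - y)))

/-- The (total) `K`-perimeter of `E`. -/
def perKtot {n : ℕ} (K : Euc n → ℝ) (E : Set (Euc n)) : ℝ≥0∞ :=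
  ∫⁻ x in E, ∫⁻ y in Eᶜ, ENNReal.ofReal (K (x - y))

/-- `A` is compactly contained in `Ω`. -/
def CptIn {n : ℕ} (A Ω : Set (Euc n)) : Prop :=
  IsCompact (closure A) ∧ closure A ⊆ Ω

/-- `E` is `K`-outward minimizing in `Ω`. -/
def OutMin {n : ℕ} (K : Euc n → ℝ) (E Ω : Set (Euc n)) : Prop :=
  ∀ F : Set (Euc n), MeasurableSet F → E ⊆ F → CptIn (F \ E) Ω →
    perK K E Ω ≤ perK K F Ω

/-- `E` is strongly `K`-outward minimizing in `Ω` with constant `δ`. -/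
def StrongOutMin {n : ℕ} (K : Euc n → ℝ) (δ : ℝ) (E Ω : Set (Euc n)) : Prop :=
  ∀ F : Set (Euc n), MeasurableSet F → E ⊆ F → CptIn (F \ E) Ω →
    perK K E Ω + ENNReal.ofReal δ * volume (F \ E) ≤ perK K F Ω

end
noncomputable section
open MeasureTheory Set Filter Metric Topology
open scoped ENNReal Pointwise

/-- The truncated `K`-curvature of `G` at `x`, with truncation parameter `ε`:
`∫_{ℝⁿ∖B(x,ε)} (χ_{Gᶜ}(y) − χ_G(y)) K(x−y) dy`. -/
def truncCurv {n : ℕ} (K : Euc n → ℝ) (G : Set (Euc n)) (x : Euc n) (ε : ℝ) : ℝ :=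
  ∫ y in (Metric.ball x ε)ᶜ,
    ((Gᶜ).indicator (fun _ => (1:ℝ)) y - G.indicator (fun _ => (1:ℝ)) y) * K (x - y)

/-- `G` has compact boundary of class `C^{1,1}`: the boundary is compact, and `G` is the
sublevel set of a `C^1` function with Lipschitz gradient which is nondegenerate on the
boundary. -/
def HasCptC11Boundary {n : ℕ} (G : Set (Euc n)) : Prop :=
  IsCompact (frontier G) ∧
  ∃ φ : Euc n → ℝ, ContDiff ℝ 1 φ ∧ (∃ L : NNReal, LipschitzWith L (fderiv ℝ φ)) ∧
    G = {x | φ x ≤ 0} ∧ frontier G = {x | φ x = 0} ∧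
    ∀ x ∈ frontier G, fderiv ℝ φ x ≠ 0

/-- `H^K_A(x) ≥ c` in the viscosity sense: every set `G` with compact `C^{1,1}` boundary
with `G ⊆ A` and `x ∈ ∂G` has `K`-curvature at least `c` at `x` (the curvature being the
limit of the truncated curvatures). -/
def ViscCurvGE {n : ℕ} (K : Euc n → ℝ) (A : Set (Euc n)) (x : Euc n) (c : ℝ) : Prop :=
  ∀ G : Set (Euc n), HasCptC11Boundary G → G ⊆ A → x ∈ frontier G →
    ∀ L : ℝ, Tendsto (truncCurv K G x) (𝓝[>] (0:ℝ)) (𝓝 L) → c ≤ L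

/-- Signed distance function from `E` (positive inside). -/
def sgnDist {n : ℕ} (E : Set (Euc n)) (x : Euc n) : ℝ :=
  Metric.infDist x Eᶜ - Metric.infDist x E

/-- The Almgren–Taylor–Wang energy `Per_K(G) − (1/h)∫_G d_E`. -/
def atwEnergy {n : ℕ} (K : Euc n → ℝ) (E : Set (Euc n)) (h : ℝ) (G : Set (Euc n)) : ℝ :=
  (perKtot K G).toReal - (1/h) * ∫ x in G, sgnDist E x

/-- `T` is an ATW minimizer for `E` at step `h`: it minimizes the ATW energy among all
measurable sets (competitors with infinite energy being irrelevant). -/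
def ATWMin {n : ℕ} (K : Euc n → ℝ) (E : Set (Euc n)) (h : ℝ) (T : Set (Euc n)) : Prop :=
  MeasurableSet T ∧ perKtot K T < ⊤ ∧ IntegrableOn (sgnDist E) T ∧
  ∀ G : Set (Euc n), MeasurableSet G → perKtot K G < ⊤ → IntegrableOn (sgnDist E) G →
    atwEnergy K E h T ≤ atwEnergy K E h G

/-- The set of Lebesgue density-one points of `T`. -/
def densityPts {n : ℕ} (T : Set (Euc n)) : Set (Euc n) :=
  {x | Tendsto (fun ρ : ℝ =>
      volume (T ∩ Metric.closedBall x ρ) / volume (Metric.closedBall x ρ))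
    (𝓝[>] (0:ℝ)) (𝓝 1)}

/-- The nonlocal functional `J_K(v) = ½∬ |v(x)−v(y)| K(x−y) dx dy`. -/
def JK {n : ℕ} (K : Euc n → ℝ) (v : Euc n → ℝ) : ℝ≥0∞ :=
  (1/2 : ℝ≥0∞) * ∫⁻ x : Euc n, ∫⁻ y : Euc n,
    ENNReal.ofReal |v x - v y| * ENNReal.ofReal (K (x - y))

end

open MeasureTheory Set Filter Metric Topology
open scoped ENNReal

noncomputable section
namespace CvxOutMinAux
open MeasureTheory Set Filter Metric Topology Bornology
open scoped ENNReal

variable {n : ℕ}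

lemma mp_fiber {h : Euc n → Euc n → Euc n}
    (hm : Measurable fun p : Euc n × Euc n => h p.1 p.2)
    (hfib : ∀ a, MeasurePreserving (h a) volume volume) :
    MeasurePreserving (fun p : Euc n × Euc n => (p.1, h p.1 p.2)) volume volume := by
  have hT : Measurable fun p : Euc n × Euc n => (p.1, h p.1 p.2) :=
    measurable_fst.prodMk hm
  refine ⟨hT, ?_⟩
  rw [Measure.volume_eq_prod]
  refine (Measure.prod_eq fun s t hs ht => ?_).symm
  rw [← Measure.volume_eq_prod, Measure.map_apply hT ((hs.prod ht))]
  have hpre : (fun p : Euc n × Euc n => (p.1, h p.1 p.2)) ⁻¹' (s ×ˢ t)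
      = {p : Euc n × Euc n | p.1 ∈ s ∧ h p.1 p.2 ∈ t} := by
    ext p; simp [Set.mem_prod]
  have hmeas : MeasurableSet {p : Euc n × Euc n | p.1 ∈ s ∧ h p.1 p.2 ∈ t} :=
    (measurable_fst hs).inter (hm ht)
  rw [hpre, Measure.volume_eq_prod, Measure.prod_apply hmeas]
  have : ∀ x : Euc n, (volume (Prod.mk x ⁻¹' {p : Euc n × Euc n | p.1 ∈ s ∧ h p.1 p.2 ∈ t}))
      = s.indicator (fun _ => volume t) x := by
    intro x
    by_cases hx : x ∈ s
    · have : Prod.mk x ⁻¹' {p : Euc n × Euc n | p.1 ∈ s ∧ h p.1 p.2 ∈ t} = (h x) ⁻¹' t := by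
        ext y; simp [hx]
      rw [this, (hfib x).measure_preimage ht.nullMeasurableSet, indicator_of_mem hx]
    · have : Prod.mk x ⁻¹' {p : Euc n × Euc n | p.1 ∈ s ∧ h p.1 p.2 ∈ t} = ∅ := by
        ext y; simp [hx]
      rw [this, indicator_of_notMem hx]; simp
  rw [lintegral_congr this, lintegral_indicator_const hs]
  exact mul_comm _ _

lemma mp_swap : MeasurePreserving (Prod.swap) (volume : Measure (Euc n × Euc n)) volume := by
  rw [Measure.volume_eq_prod]; exact Measure.measurePreserving_swap

lemma mp_T (k : ℝ) :
    MeasurePreserving (fun p : Euc n × Euc n =>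
      (p.1 + k • (p.1 - p.2), p.1 + (k+1) • (p.1 - p.2))) volume volume := by
  have h1 : MeasurePreserving (fun p : Euc n × Euc n => (p.1, p.1 - p.2)) volume volume :=
    mp_fiber (measurable_fst.sub measurable_snd) fun a => Measure.measurePreserving_sub_left volume a
  have h2' : MeasurePreserving (fun p : Euc n × Euc n => (p.1, p.2 + k • p.1)) volume volume :=
    mp_fiber (measurable_snd.add (measurable_fst.const_smul k))
      fun a => measurePreserving_add_right volume (k • a)
  have h2 : MeasurePreserving (fun p : Euc n × Euc n => (p.1 + k • p.2, p.2)) volume volume := by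
    have := (mp_swap.comp h2').comp mp_swap
    convert this using 1
    funext p; rfl
  have h3 : MeasurePreserving (fun p : Euc n × Euc n => (p.1, p.1 + p.2)) volume volume :=
    mp_fiber (measurable_fst.add measurable_snd) fun a => measurePreserving_add_left volume a
  have hco := (h3.comp h2).comp h1
  convert hco using 1
  funext p
  show _ = (((fun p : Euc n × Euc n => (p.1, p.1 + p.2)) ∘ _) ∘ _) p
  simp only [Function.comp]
  refine Prod.ext rfl ?_
  show p.1 + (k+1) • (p.1 - p.2) = p.1 + k • (p.1 - p.2) + (p.1 - p.2)
  module

lemma T_invol (k : ℝ) : Function.Involutive (fun p : Euc n × Euc n =>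
    (p.1 + k • (p.1 - p.2), p.1 + (k+1) • (p.1 - p.2))) := by
  intro p
  refine Prod.ext ?_ ?_ <;> · show _ = _; simp only []; module

lemma T_meas (k : ℝ) : Measurable (fun p : Euc n × Euc n =>
    (p.1 + k • (p.1 - p.2), p.1 + (k+1) • (p.1 - p.2))) :=
  (measurable_fst.add ((measurable_fst.sub measurable_snd).const_smul k)).prodMk
    (measurable_fst.add ((measurable_fst.sub measurable_snd).const_smul (k+1)))

lemma T_emb (k : ℝ) : MeasurableEmbedding (fun p : Euc n × Euc n =>
    (p.1 + k • (p.1 - p.2), p.1 + (k+1) • (p.1 - p.2))) :=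
  MeasurableEquiv.measurableEmbedding
    ⟨(T_invol k).toPerm _, T_meas k, T_meas k⟩

lemma core_charge {κ : Euc n → ℝ≥0∞} (hκ : Measurable κ)
    (hκe : ∀ z, κ (-z) = κ z) {E A : Set (Euc n)}
    (hEm : MeasurableSet E) (hAm : MeasurableSet A)
    (f : Euc n →L[ℝ] ℝ) {c : ℝ} (hE : ∀ y ∈ E, c ≤ f y) (hA : ∀ x ∈ A, f x < c)
    (hbd : IsBounded A) :
    ∫⁻ p in A ×ˢ E, κ (p.1 - p.2) ≤ ∫⁻ p in A ×ˢ (E ∪ A)ᶜ, κ (p.1 - p.2) := by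
  classical
  set T : ℕ → Euc n × Euc n → Euc n × Euc n := fun k p =>
    (p.1 + (k:ℝ) • (p.1 - p.2), p.1 + ((k:ℝ)+1) • (p.1 - p.2)) with hTdef
  set S : ℕ → Set (Euc n × Euc n) := fun k =>
    ((A ×ˢ E) ∩ {p | ∀ i : ℕ, i ≤ k → p.1 + (i:ℝ) • (p.1 - p.2) ∈ A})
      ∩ {p | p.1 + ((k:ℝ)+1) • (p.1 - p.2) ∉ A} with hSdef
  obtain ⟨R, hR⟩ := isBounded_iff_forall_norm_le.1 hbd
  have hfA : ∀ x ∈ A, |f x| ≤ ‖f‖ * R := by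
    intro x hx
    calc |f x| = ‖f x‖ := rfl
    _ ≤ ‖f‖ * ‖x‖ := f.le_opNorm x
    _ ≤ ‖f‖ * R := by
        have := hR x hx
        have h0 : (0:ℝ) ≤ ‖f‖ := norm_nonneg f
        nlinarith
  have hfchain : ∀ (p : Euc n × Euc n) (r : ℝ),
      f (p.1 + r • (p.1 - p.2)) = f p.1 + r * (f p.1 - f p.2) := by
    intro p r
    rw [map_add, _root_.map_smul, map_sub, smul_eq_mul]
  -- existence of chain exit
  have hex : ∀ p ∈ A ×ˢ E, ∃ k : ℕ, p.1 + ((k:ℝ)+1) • (p.1 - p.2) ∉ A := by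
    rintro p ⟨hx, hy⟩
    have hδ : 0 < f p.2 - f p.1 := by
      have := hA _ hx; have := hE _ hy; linarith
    obtain ⟨k, hk⟩ := exists_nat_gt ((f p.1 + ‖f‖ * R) / (f p.2 - f p.1))
    refine ⟨k, fun hmem => ?_⟩
    have h1 := hfA _ hmem
    rw [hfchain] at h1
    have hk' : f p.1 + ‖f‖ * R < ((k:ℝ)+1) * (f p.2 - f p.1) := by
      have : (f p.1 + ‖f‖ * R) / (f p.2 - f p.1) * (f p.2 - f p.1)
          < ((k:ℝ)+1) * (f p.2 - f p.1) := by
        apply mul_lt_mul_of_pos_right _ hδ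
        linarith
      rwa [div_mul_cancel₀ _ (ne_of_gt hδ)] at this
    rw [abs_le] at h1
    nlinarith [h1.1, h1.2]
  -- covering
  have hScov : A ×ˢ E = ⋃ k, S k := by
    apply Subset.antisymm
    · intro p hp
      have hfind := hex p hp
      let k0 := Nat.find hfind
      refine mem_iUnion.2 ⟨k0, ⟨⟨hp, ?_⟩, Nat.find_spec hfind⟩⟩
      intro i hi
      cases i with
      | zero => simpa using hp.1
      | succ j =>
        have hj : j < k0 := lt_of_lt_of_le (Nat.lt_succ_self j) hi
        have := Nat.find_min hfind hj
        push_neg at this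
        have hcast : ((j:ℝ)+1) = ((j+1 : ℕ):ℝ) := by push_cast; ring
        rwa [hcast] at this
    · exact iUnion_subset fun k => inter_subset_left.trans inter_subset_left
  have hchainMeas : ∀ r : ℝ, Measurable fun p : Euc n × Euc n => p.1 + r • (p.1 - p.2) :=
    fun r => measurable_fst.add ((measurable_fst.sub measurable_snd).const_smul r)
  have hSmeas : ∀ k, MeasurableSet (S k) := by
    intro k
    refine ((hAm.prod hEm).inter ?_).inter ?_
    · have : {p : Euc n × Euc n | ∀ i : ℕ, i ≤ k → p.1 + (i:ℝ) • (p.1 - p.2) ∈ A}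
          = ⋂ i : ℕ, ⋂ (_ : i ≤ k), (fun p : Euc n × Euc n => p.1 + (i:ℝ) • (p.1 - p.2)) ⁻¹' A := by
        ext p; simp
      rw [this]
      exact MeasurableSet.iInter fun i => MeasurableSet.iInter fun _ => (hchainMeas i) hAm
    · exact ((hchainMeas ((k:ℝ)+1)) hAm).compl
  have hSdisj : Pairwise (Function.onFun Disjoint S) := by
    have haux : ∀ k j : ℕ, k < j → Disjoint (S k) (S j) := by
      intro k j hkj
      rw [Set.disjoint_left]
      rintro p ⟨⟨_, _⟩, hout⟩ ⟨⟨_, hchain⟩, _⟩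
      have := hchain (k+1) hkj
      have hcast : (((k+1:ℕ)):ℝ) = ((k:ℝ)+1) := by push_cast; ring
      rw [hcast] at this
      exact hout this
    intro k j hkj
    rcases lt_or_gt_of_ne hkj with h | h
    · exact haux _ _ h
    · exact (haux _ _ h).symm
  -- transformation of each piece
  have hTd : ∀ (k : ℕ) (p : Euc n × Euc n), (T k p).2 - (T k p).1 = p.1 - p.2 := by
    intro k p; show (p.1 + ((k:ℝ)+1) • (p.1 - p.2)) - (p.1 + (k:ℝ) • (p.1 - p.2)) = p.1 - p.2
    module
  have hstep : ∀ k, ∫⁻ p in S k, κ (p.1 - p.2)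
      = ∫⁻ q in T k '' S k, κ (q.2 - q.1) := by
    intro k
    have := (mp_T (n := n) (k:ℝ)).setLIntegral_comp_emb (T_emb (k:ℝ))
      (fun q => κ (q.2 - q.1)) (S k)
    rw [← this]
    refine lintegral_congr fun p => ?_
    rw [hTd k p]
  have himg : ∀ k, T k '' S k ⊆ A ×ˢ (E ∪ A)ᶜ := by
    rintro k q ⟨p, hp, rfl⟩
    obtain ⟨⟨⟨hpx, hpy⟩, hchain⟩, hout⟩ := hp
    constructor
    · exact hchain k le_rfl
    · intro hmem
      rcases hmem with hmem | hmem
      · have h1 : c ≤ f (p.1 + ((k:ℝ)+1) • (p.1 - p.2)) := hE _ hmem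
        rw [hfchain] at h1
        have h2 := hA _ hpx
        have h3 := hE _ hpy
        have h4 : ((k:ℝ)+1) * (f p.1 - f p.2) ≤ 0 := by
          apply mul_nonpos_of_nonneg_of_nonpos
          · positivity
          · linarith
        linarith
      · exact hout hmem
  have hback : ∀ k, ∀ q ∈ T k '' S k,
      (∀ r : ℕ, r ≤ k → q.1 - (r:ℝ) • (q.2 - q.1) ∈ A) ∧
        q.1 - ((k:ℝ)+1) • (q.2 - q.1) ∈ E := by
    rintro k q ⟨p, hp, rfl⟩
    obtain ⟨⟨⟨hpx, hpy⟩, hchain⟩, _⟩ := hp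
    constructor
    · intro r hr
      have hcast : ((k - r : ℕ):ℝ) = (k:ℝ) - (r:ℝ) := by
        rw [Nat.cast_sub hr]
      have heq : (T k p).1 - (r:ℝ) • ((T k p).2 - (T k p).1)
          = p.1 + ((k - r : ℕ):ℝ) • (p.1 - p.2) := by
        rw [hTd k p, hcast]
        show (p.1 + (k:ℝ) • (p.1 - p.2)) - (r:ℝ) • (p.1 - p.2) = _
        module
      rw [heq]
      exact hchain _ (Nat.sub_le k r)
    · have heq : (T k p).1 - ((k:ℝ)+1) • ((T k p).2 - (T k p).1) = p.2 := by
        rw [hTd k p]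
        show (p.1 + (k:ℝ) • (p.1 - p.2)) - ((k:ℝ)+1) • (p.1 - p.2) = p.2
        module
      rw [heq]
      exact hpy
  have himdisj : Pairwise (Function.onFun Disjoint (fun k => T k '' S k)) := by
    have haux : ∀ k j : ℕ, k < j → Disjoint (T k '' S k) (T j '' S j) := by
      intro k j hkj
      rw [Set.disjoint_left]
      intro q hqk hqj
      have h1 := (hback k q hqk).2
      have h2 := (hback j q hqj).1 (k+1) hkj
      have hcast : (((k+1:ℕ)):ℝ) = ((k:ℝ)+1) := by push_cast; ring
      rw [hcast] at h2
      have := hE _ h1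
      have := hA _ h2
      linarith
    intro k j hkj
    rcases lt_or_gt_of_ne hkj with h | h
    · exact haux _ _ h
    · exact (haux _ _ h).symm
  have himgmeas : ∀ k, MeasurableSet (T k '' S k) := by
    intro k
    rw [Set.image_eq_preimage_of_inverse (T_invol (n := n) (k:ℝ)).leftInverse (T_invol (n := n) (k:ℝ)).rightInverse]
    exact (T_meas (n := n) (k:ℝ)) (hSmeas k)
  calc ∫⁻ p in A ×ˢ E, κ (p.1 - p.2)
      = ∫⁻ p in ⋃ k, S k, κ (p.1 - p.2) := by rw [← hScov]
    _ = ∑' k, ∫⁻ p in S k, κ (p.1 - p.2) := lintegral_iUnion hSmeas hSdisj _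
    _ = ∑' k, ∫⁻ q in T k '' S k, κ (q.2 - q.1) := by
        exact tsum_congr hstep
    _ = ∫⁻ q in ⋃ k, T k '' S k, κ (q.2 - q.1) := (lintegral_iUnion himgmeas himdisj _).symm
    _ ≤ ∫⁻ q in A ×ˢ (E ∪ A)ᶜ, κ (q.2 - q.1) := lintegral_mono_set (iUnion_subset himg)
    _ = ∫⁻ q in A ×ˢ (E ∪ A)ᶜ, κ (q.1 - q.2) := by
        refine lintegral_congr fun q => ?_
        rw [← neg_sub q.1 q.2, hκe]


lemma iter_eq_prod {κ : Euc n → ℝ≥0∞} (hκ : Measurable κ) (S T : Set (Euc n)) :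
    ∫⁻ x in S, ∫⁻ y in T, κ (x - y) = ∫⁻ p in S ×ˢ T, κ (p.1 - p.2) := by
  have hm : Measurable fun p : Euc n × Euc n => κ (p.1 - p.2) :=
    hκ.comp (measurable_fst.sub measurable_snd)
  rw [show (volume : Measure (Euc n × Euc n)).restrict (S ×ˢ T)
      = ((volume : Measure (Euc n)).restrict S).prod ((volume : Measure (Euc n)).restrict T) by
    rw [Measure.volume_eq_prod, Measure.prod_restrict]]
  exact (lintegral_prod _ hm.aemeasurable).symm

lemma Q_symm {κ : Euc n → ℝ≥0∞} (hκe : ∀ z, κ (-z) = κ z) (A B : Set (Euc n)) :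
    ∫⁻ p in B ×ˢ A, κ (p.1 - p.2) = ∫⁻ p in A ×ˢ B, κ (p.1 - p.2) := by
  have hsw : MeasurePreserving (Prod.swap) (volume : Measure (Euc n × Euc n)) volume := mp_swap
  have hemb : MeasurableEmbedding (Prod.swap : Euc n × Euc n → Euc n × Euc n) :=
    MeasurableEquiv.prodComm.measurableEmbedding
  have h := hsw.setLIntegral_comp_emb hemb (fun q => κ (q.1 - q.2)) (A ×ˢ B)
  rw [Set.image_swap_prod] at h
  rw [← h]
  refine lintegral_congr fun p => ?_
  show κ (p.2 - p.1) = κ (p.1 - p.2)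
  rw [← neg_sub p.1 p.2, hκe]

lemma prod_disjoint_right {U V W : Set (Euc n)} (h : Disjoint V W) :
    Disjoint (U ×ˢ V) (U ×ˢ W) := by
  rw [Set.disjoint_left] at h ⊢
  rintro p ⟨_, h1⟩ ⟨_, h2⟩
  exact h h1 h2

lemma prod_disjoint_left {U V W W' : Set (Euc n)} (h : Disjoint U V) :
    Disjoint (U ×ˢ W) (V ×ˢ W') := by
  rw [Set.disjoint_left] at h ⊢
  rintro p ⟨h1, _⟩ ⟨h2, _⟩
  exact h h1 h2

lemma perK_eq_Q {K : Euc n → ℝ} (hK : Measurable K) (E Ω : Set (Euc n)) :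
    perK K E Ω = (∫⁻ p in E ×ˢ (Ω \ E), ENNReal.ofReal (K (p.1 - p.2)))
      + ∫⁻ p in (E ∩ Ω) ×ˢ (Ω ∪ E)ᶜ, ENNReal.ofReal (K (p.1 - p.2)) := by
  have hκ : Measurable fun z : Euc n => ENNReal.ofReal (K z) :=
    ENNReal.measurable_ofReal.comp hK
  unfold perK
  rw [iter_eq_prod hκ, iter_eq_prod hκ]

lemma cut_step {K : Euc n → ℝ} (hK : Measurable K) (hKe : ∀ x : Euc n, x ≠ 0 → K (-x) = K x)
    (Ω Fm : Set (Euc n)) (hΩ : MeasurableSet Ω) (hFm : MeasurableSet Fm)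
    (f : Euc n →L[ℝ] ℝ) (c : ℝ)
    (hAΩ : Fm ∩ {x | f x < c} ⊆ Ω) (hbd : IsBounded (Fm ∩ {x | f x < c})) :
    perK K (Fm ∩ {y | c ≤ f y}) Ω ≤ perK K Fm Ω := by
  classical
  set κ : Euc n → ℝ≥0∞ := fun z => ENNReal.ofReal (K z) with hκdef
  have hκm : Measurable κ := ENNReal.measurable_ofReal.comp hK
  have hκe : ∀ z, κ (-z) = κ z := by
    intro z
    by_cases hz : z = 0
    · simp [hz]
    · simp only [hκdef, hKe z hz]
  set E := Fm ∩ {y | c ≤ f y} with hEdef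
  set A := Fm ∩ {x | f x < c} with hAdef
  have hEm : MeasurableSet E :=
    hFm.inter (measurableSet_le measurable_const f.continuous.measurable)
  have hAm : MeasurableSet A :=
    hFm.inter (measurableSet_lt f.continuous.measurable measurable_const)
  have hEA : Fm = E ∪ A := by
    ext x
    simp only [hEdef, hAdef, mem_union, mem_inter_iff, mem_setOf_eq]
    constructor
    · intro h
      by_cases hc : c ≤ f x
      · exact Or.inl ⟨h, hc⟩
      · exact Or.inr ⟨h, not_le.mp hc⟩
    · rintro (⟨h, _⟩ | ⟨h, _⟩) <;> exact h
  have hEsub : E ⊆ Fm := inter_subset_left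
  have hAsub : A ⊆ Fm := inter_subset_left
  set O := Ω \ Fm with hOdef
  set X := (Ω ∪ E)ᶜ with hXdef
  have hOm : MeasurableSet O := hΩ.diff hFm
  have hXm : MeasurableSet X := (hΩ.union hEm).compl
  have hE_f : ∀ y ∈ E, c ≤ f y := fun y hy => hy.2
  have hA_f : ∀ x ∈ A, f x < c := fun x hx => hx.2
  have hdisjOA : Disjoint O A := by
    rw [Set.disjoint_left]
    rintro x ⟨_, hx1⟩ hx2
    exact hx1 (hAsub hx2)
  have hdisjOX : Disjoint O X := by
    rw [Set.disjoint_left]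
    rintro x ⟨hx1, _⟩ hx2
    exact hx2 (Or.inl hx1)
  have hdisjAX : Disjoint A X := by
    rw [Set.disjoint_left]
    rintro x hx1 hx2
    exact hx2 (Or.inl (hAΩ hx1))
  have hΩdiffE : Ω \ E = O ∪ A := by
    ext x
    simp only [hOdef, mem_diff, mem_union]
    constructor
    · rintro ⟨hxΩ, hxE⟩
      by_cases hxF : x ∈ Fm
      · refine Or.inr ?_
        rcases (hEA ▸ hxF) with h | h
        · exact absurd h hxE
        · exact h
      · exact Or.inl ⟨hxΩ, hxF⟩
    · rintro (⟨hxΩ, hxF⟩ | hxA)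
      · exact ⟨hxΩ, fun hxE => hxF (hEsub hxE)⟩
      · refine ⟨hAΩ hxA, fun hxE => ?_⟩
        have h1 : c ≤ f x := hxE.2
        have h2 : f x < c := hxA.2
        linarith
  have hFc : (E ∪ A)ᶜ = O ∪ X := by
    rw [← hEA]
    ext x
    simp only [mem_compl_iff, hOdef, hXdef, mem_union, mem_diff, mem_compl_iff]
    constructor
    · intro hxF
      by_cases hxΩ : x ∈ Ω
      · exact Or.inl ⟨hxΩ, hxF⟩
      · exact Or.inr (fun h => h.elim hxΩ (fun hE' => hxF (hEsub hE')))
    · rintro (⟨_, hxF⟩ | hX) hxF'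
      · exact hxF hxF'
      · rcases (hEA ▸ hxF') with h | h
        · exact hX (Or.inr h)
        · exact hX (Or.inl (hAΩ h))
  have hFmΩ : Fm ∩ Ω = (E ∩ Ω) ∪ A := by
    ext x
    simp only [mem_inter_iff, mem_union]
    constructor
    · rintro ⟨hxF, hxΩ⟩
      rcases (hEA ▸ hxF) with h | h
      · exact Or.inl ⟨h, hxΩ⟩
      · exact Or.inr h
    · rintro (⟨h, hΩ'⟩ | h)
      · exact ⟨hEsub h, hΩ'⟩
      · exact ⟨hAsub h, hAΩ h⟩
  have hΩF : (Ω ∪ Fm)ᶜ = X := by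
    rw [hXdef]
    ext x
    simp only [mem_compl_iff, mem_union]
    constructor
    · intro h
      exact fun h' => h (h'.elim Or.inl (fun hE' => Or.inr (hEsub hE')))
    · intro h h'
      refine h (h'.elim Or.inl (fun hF => ?_))
      rcases (hEA ▸ hF) with h2 | h2
      · exact Or.inr h2
      · exact Or.inl (hAΩ h2)
  -- core inequality
  have hcore : ∫⁻ p in E ×ˢ A, κ (p.1 - p.2) ≤
      (∫⁻ p in A ×ˢ O, κ (p.1 - p.2)) + ∫⁻ p in A ×ˢ X, κ (p.1 - p.2) := by
    calc ∫⁻ p in E ×ˢ A, κ (p.1 - p.2) = ∫⁻ p in A ×ˢ E, κ (p.1 - p.2) := Q_symm hκe A E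
      _ ≤ ∫⁻ p in A ×ˢ (E ∪ A)ᶜ, κ (p.1 - p.2) :=
          core_charge hκm hκe hEm hAm f hE_f hA_f hbd
      _ = ∫⁻ p in (A ×ˢ O) ∪ (A ×ˢ X), κ (p.1 - p.2) := by rw [hFc, Set.prod_union]
      _ = _ := lintegral_union (hAm.prod hXm) (prod_disjoint_right hdisjOX)
  calc perK K E Ω
      = (∫⁻ p in E ×ˢ (Ω \ E), κ (p.1 - p.2)) + ∫⁻ p in (E ∩ Ω) ×ˢ X, κ (p.1 - p.2) :=
        perK_eq_Q hK E Ω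
    _ = ((∫⁻ p in E ×ˢ O, κ (p.1 - p.2)) + ∫⁻ p in E ×ˢ A, κ (p.1 - p.2))
        + ∫⁻ p in (E ∩ Ω) ×ˢ X, κ (p.1 - p.2) := by
        rw [hΩdiffE, Set.prod_union, lintegral_union (hEm.prod hAm) (prod_disjoint_right hdisjOA)]
    _ ≤ ((∫⁻ p in E ×ˢ O, κ (p.1 - p.2))
          + ((∫⁻ p in A ×ˢ O, κ (p.1 - p.2)) + ∫⁻ p in A ×ˢ X, κ (p.1 - p.2)))
        + ∫⁻ p in (E ∩ Ω) ×ˢ X, κ (p.1 - p.2) := by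
        gcongr
    _ = ((∫⁻ p in E ×ˢ O, κ (p.1 - p.2)) + ∫⁻ p in A ×ˢ O, κ (p.1 - p.2))
        + ((∫⁻ p in (E ∩ Ω) ×ˢ X, κ (p.1 - p.2)) + ∫⁻ p in A ×ˢ X, κ (p.1 - p.2)) := by
        ring
    _ = (∫⁻ p in Fm ×ˢ (Ω \ Fm), κ (p.1 - p.2))
        + ∫⁻ p in (Fm ∩ Ω) ×ˢ (Ω ∪ Fm)ᶜ, κ (p.1 - p.2) := by
        have hdisjEA : Disjoint E A := by
          rw [Set.disjoint_left]
          rintro x hx1 hx2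
          have h1 : c ≤ f x := hx1.2
          have h2 : f x < c := hx2.2
          linarith
        rw [show Ω \ Fm = O from rfl, hΩF, hFmΩ, hEA, Set.union_prod, Set.union_prod,
          lintegral_union (hAm.prod hOm) (prod_disjoint_left hdisjEA),
          lintegral_union (hAm.prod hXm)
            (prod_disjoint_left (hdisjEA.mono_left inter_subset_left))]
    _ = perK K Fm Ω := (perK_eq_Q hK Fm Ω).symm

lemma perK_liminf {K : Euc n → ℝ} (hK : Measurable K) {Ω : Set (Euc n)}
    (hΩ : MeasurableSet Ω) {Fs : ℕ → Set (Euc n)} (hFsm : ∀ m, MeasurableSet (Fs m))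
    (hanti : ∀ m, Fs (m+1) ⊆ Fs m) {C : Set (Euc n)} (hC : MeasurableSet C)
    (hCsub : ∀ m, C ⊆ Fs m) (hInt : ⋂ m, Fs m ⊆ C) :
    perK K C Ω ≤ Filter.liminf (fun m => perK K (Fs m) Ω) Filter.atTop := by
  classical
  set κ : Euc n → ℝ≥0∞ := fun z => ENNReal.ofReal (K z) with hκdef
  have hκm : Measurable κ := ENNReal.measurable_ofReal.comp hK
  set g : Euc n × Euc n → ℝ≥0∞ := fun p => κ (p.1 - p.2) with hgdef
  have hgm : Measurable g := hκm.comp (measurable_fst.sub measurable_snd)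
  set W : Set (Euc n) → Set (Euc n × Euc n) :=
    fun S => (S ×ˢ (Ω \ S)) ∪ ((S ∩ Ω) ×ˢ (Ω ∪ S)ᶜ) with hWdef
  have hWm : ∀ S : Set (Euc n), MeasurableSet S → MeasurableSet (W S) := by
    intro S hS
    exact ((hS.prod (hΩ.diff hS))).union ((hS.inter hΩ).prod (hΩ.union hS).compl)
  have hWdisj : ∀ S : Set (Euc n),
      Disjoint (S ×ˢ (Ω \ S)) ((S ∩ Ω) ×ˢ (Ω ∪ S)ᶜ) := by
    intro S
    rw [Set.disjoint_left]
    rintro p ⟨_, hp2⟩ ⟨_, hq2⟩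
    exact hq2 (Or.inl hp2.1)
  have hperW : ∀ S : Set (Euc n), MeasurableSet S →
      perK K S Ω = ∫⁻ p, (W S).indicator g p := by
    intro S hS
    rw [perK_eq_Q hK S Ω,
      ← lintegral_union ((hS.inter hΩ).prod (hΩ.union hS).compl) (hWdisj S),
      lintegral_indicator (hWm S hS)]
  have hmono : ∀ a b : ℕ, a ≤ b → Fs b ⊆ Fs a := fun a b hab =>
    (antitone_nat_of_succ_le hanti) hab
  have hstab : ∀ x : Euc n, ∀ᶠ m in Filter.atTop, (x ∈ Fs m ↔ x ∈ C) := by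
    intro x
    by_cases hx : x ∈ C
    · exact Filter.Eventually.of_forall fun m => iff_of_true (hCsub m hx) hx
    · have : ∃ m, x ∉ Fs m := by
        by_contra h
        push_neg at h
        exact hx (hInt (mem_iInter.2 h))
      obtain ⟨m0, hm0⟩ := this
      refine Filter.eventually_atTop.2 ⟨m0, fun m hm => iff_of_false (fun hmem => hm0 ?_) hx⟩
      exact hmono m0 m hm hmem
  have hpt : ∀ p : Euc n × Euc n,
      (W C).indicator g p = Filter.liminf (fun m => (W (Fs m)).indicator g p) Filter.atTop := by
    intro p
    have hev : ∀ᶠ m in Filter.atTop, (W (Fs m)).indicator g p = (W C).indicator g p := by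
      filter_upwards [hstab p.1, hstab p.2] with m hm1 hm2
      have hiff : p ∈ W (Fs m) ↔ p ∈ W C := by
        simp only [hWdef, mem_union, Set.mem_prod, mem_diff, mem_inter_iff, mem_compl_iff,
          mem_union, hm1, hm2]
      simp only [Set.indicator_apply]
      exact if_congr hiff rfl rfl
    rw [Filter.liminf_congr hev, Filter.liminf_const]
  calc perK K C Ω = ∫⁻ p, (W C).indicator g p := hperW C hC
    _ = ∫⁻ p, Filter.liminf (fun m => (W (Fs m)).indicator g p) Filter.atTop :=
        lintegral_congr hpt
    _ ≤ Filter.liminf (fun m => ∫⁻ p, (W (Fs m)).indicator g p) Filter.atTop :=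
        lintegral_liminf_le fun m => hgm.indicator (hWm _ (hFsm m))
    _ = Filter.liminf (fun m => perK K (Fs m) Ω) Filter.atTop := by
        refine Filter.liminf_congr (Filter.Eventually.of_forall fun m => ?_)
        exact (hperW (Fs m) (hFsm m)).symm

lemma exists_halfspaces {C : Set (Euc n)} (hne : C.Nonempty) (hcl : IsClosed C)
    (hconv : Convex ℝ C) :
    ∃ (f : ℕ → (Euc n →L[ℝ] ℝ)) (c : ℕ → ℝ),
      (∀ m, ∀ x ∈ C, c m ≤ f m x) ∧ ∀ z ∉ C, ∃ m, f m z < c m := by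
  classical
  obtain ⟨u, hu⟩ := TopologicalSpace.exists_dense_seq (Euc n)
  have hsep : ∀ iq : ℕ × ℚ, ∃ fc : (Euc n →L[ℝ] ℝ) × ℝ,
      (∀ x ∈ C, fc.2 ≤ fc.1 x) ∧
      (Disjoint (Metric.closedBall (u iq.1) (iq.2 : ℝ)) C →
        ∀ w ∈ Metric.closedBall (u iq.1) (iq.2 : ℝ), fc.1 w < fc.2) := by
    rintro ⟨i, q⟩
    by_cases hd : Disjoint (Metric.closedBall (u i) (q : ℝ)) C
    · obtain ⟨f, a, b, hball, hab, hC⟩ :=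
        geometric_hahn_banach_compact_closed (convex_closedBall _ _)
          (isCompact_closedBall _ _) hconv hcl hd
      refine ⟨(f, b), fun x hx => (hC x hx).le, fun _ w hw => lt_trans (hball w hw) hab⟩
    · exact ⟨(0, 0), fun x _ => le_refl _, fun hd' => absurd hd' hd⟩
  choose fc hfc1 hfc2 using hsep
  set e : ℕ ≃ ℕ × ℚ := (Denumerable.eqv (ℕ × ℚ)).symm with hedef
  refine ⟨fun m => (fc (e m)).1, fun m => (fc (e m)).2, fun m => hfc1 (e m), ?_⟩
  intro z hz
  have hpos : 0 < Metric.infDist z C := (hcl.notMem_iff_infDist_pos hne).mp hz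
  set δ := Metric.infDist z C with hδdef
  obtain ⟨i, hi⟩ := hu.exists_dist_lt z (by positivity : (0:ℝ) < δ/3)
  obtain ⟨q, hq1, hq2⟩ := exists_rat_btwn (by linarith : δ/3 < δ/2)
  have hq0 : (0:ℝ) < q := lt_trans (by positivity) hq1
  have hdisj : Disjoint (Metric.closedBall (u i) (q : ℝ)) C := by
    rw [Set.disjoint_left]
    intro w hw hwC
    have h1 : dist z w ≤ dist z (u i) + dist (u i) w := dist_triangle _ _ _
    have h2 : dist (u i) w ≤ (q:ℝ) := by rwa [Metric.mem_closedBall, dist_comm] at hw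
    have h3 : δ ≤ dist z w := Metric.infDist_le_dist_of_mem hwC
    have h4 : dist z (u i) < δ/3 := hi
    linarith
  have hzball : z ∈ Metric.closedBall (u i) (q : ℝ) := by
    rw [Metric.mem_closedBall]
    linarith [hi]
  refine ⟨e.symm (i, q), ?_⟩
  show (fc (e (e.symm (i, q)))).1 z < (fc (e (e.symm (i, q)))).2
  rw [Equiv.apply_symm_apply]
  exact hfc2 (i, q) hdisj z hzball

end CvxOutMinAux
end

/-- closed convex sets are `K`-outward minimizing in every ball. -/
theorem convex_outMin {n : ℕ} (K : Euc n → ℝ) (hK : KernelOK K)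
    (C : Set (Euc n)) (hCcl : IsClosed C) (hCconv : Convex ℝ C)
    (R : ℝ) (hR : 0 < R) :
    OutMin K C (Metric.ball (0 : Euc n) R) := by
  intro F hFm hCF hcpt
  classical
  rcases C.eq_empty_or_nonempty with rfl | hne
  · have : perK K (∅ : Set (Euc n)) (Metric.ball (0 : Euc n) R) = 0 := by
      simp [perK]
    rw [this]
    exact zero_le
  · obtain ⟨f, c, h1, h2⟩ := CvxOutMinAux.exists_halfspaces hne hCcl hCconv
    set Ω := Metric.ball (0 : Euc n) R with hΩdef
    have hΩm : MeasurableSet Ω := measurableSet_ball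
    set Fs : ℕ → Set (Euc n) := fun m => F ∩ ⋂ i < m, {y | c i ≤ f i y} with hFsdef
    have hFs0 : Fs 0 = F := by
      simp [hFsdef]
    have hFssucc : ∀ m, Fs (m+1) = Fs m ∩ {y | c m ≤ f m y} := by
      intro m
      simp only [hFsdef]
      rw [biInter_lt_succ, ← Set.inter_assoc]
    have hHm : ∀ i : ℕ, MeasurableSet {y : Euc n | c i ≤ f i y} := fun i =>
      measurableSet_le measurable_const (f i).continuous.measurable
    have hFsm : ∀ m, MeasurableSet (Fs m) := fun m =>
      hFm.inter (MeasurableSet.iInter fun i => MeasurableSet.iInter fun _ => hHm i)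
    have hFsF : ∀ m, Fs m ⊆ F := fun m => inter_subset_left
    have hCsub : ∀ m, C ⊆ Fs m := fun m x hx =>
      ⟨hCF hx, mem_iInter.2 fun i => mem_iInter.2 fun _ => h1 i x hx⟩
    have hanti : ∀ m, Fs (m+1) ⊆ Fs m := by
      intro m
      rw [hFssucc]
      exact inter_subset_left
    have hInt : ⋂ m, Fs m ⊆ C := by
      intro z hz
      by_contra hzC
      obtain ⟨m, hm⟩ := h2 z hzC
      have hzm : z ∈ Fs (m+1) := mem_iInter.1 hz (m+1)
      rw [hFssucc] at hzm
      have hle : c m ≤ f m z := hzm.2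
      linarith
    have hAsub : ∀ m, Fs m ∩ {x | f m x < c m} ⊆ F \ C := by
      intro m x hx
      refine ⟨hFsF m hx.1, fun hc => ?_⟩
      have hle : c m ≤ f m x := h1 m x hc
      have hlt : f m x < c m := hx.2
      linarith
    have hcut : ∀ m, perK K (Fs m) Ω ≤ perK K F Ω := by
      intro m
      induction m with
      | zero => rw [hFs0]
      | succ m ih =>
          refine le_trans ?_ ih
          rw [hFssucc]
          refine CvxOutMinAux.cut_step hK.1 hK.2.2.1 Ω (Fs m) hΩm (hFsm m) (f m) (c m) ?_ ?_
          · exact fun x hx => hcpt.2 (subset_closure (hAsub m hx))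
          · exact hcpt.1.isBounded.subset ((hAsub m).trans subset_closure)
    calc perK K C Ω
        ≤ Filter.liminf (fun m => perK K (Fs m) Ω) Filter.atTop :=
          CvxOutMinAux.perK_liminf hK.1 hΩm hFsm hanti hCcl.measurableSet hCsub hInt
      _ ≤ Filter.liminf (fun _ => perK K F Ω) Filter.atTop :=
          Filter.liminf_le_liminf (Filter.Eventually.of_forall hcut)
      _ = perK K F Ω := Filter.liminf_const _
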